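/- Let Φ be a completely positive linear map between matrix algebras. Then Φ(A) + Φ(K)* Φ(A)⁻¹ Φ(K) ≤ Φ(A + K* A⁻¹ K) for A positive definite with Φ(A) positive definite and arbitrary K. -/

import Mathlib

open Matrix
open scoped ComplexOrder Classical

/-- Square root of a positive semidefinite matrix, extended by `0`. -/
noncomputable def msqrt {n : Type*} [Fintype n] [DecidableEq n] (A : Matrix n n ℂ) :
    Matrix n n ℂ :=
  if h : A.PosSemidef then
      (h.1.eigenvectorUnitary : Matrix n n ℂ) * diagonal ((↑) ∘ Real.sqrt ∘ h.1.eigenvalues : n → ℂ) *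
        (star h.1.eigenvectorUnitary : Matrix n n ℂ)
    else 0

/-- Real power of a Hermitian matrix via the functional calculus, extended by `0`. -/
noncomputable def mrpow {n : Type*} [Fintype n] [DecidableEq n] (A : Matrix n n ℂ) (α : ℝ) :
    Matrix n n ℂ :=
  if h : A.IsHermitian then h.cfc (fun t => t ^ α) else 0

/-- A completely positive linear map between matrix algebras (Choi–Kraus form). -/
def IsCPMap {n m : Type*} [Fintype n] [Fintype m] (Φ : Matrix n n ℂ → Matrix m m ℂ) : Prop :=
  ∃ (r : ℕ) (C : Fin r → Matrix n m ℂ), ∀ X, Φ X = ∑ i, (C i)ᴴ * X * C i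

/-- The matrix geometric mean `A^{1/2} (A^{-1/2} B A^{-1/2})^{1/2} A^{1/2}`. -/
noncomputable def geomMean {n : Type*} [Fintype n] [DecidableEq n] (A B : Matrix n n ℂ) :
    Matrix n n ℂ :=
  msqrt A * msqrt ((msqrt A)⁻¹ * B * (msqrt A)⁻¹) * msqrt A

/-- The weighted geometric mean `B^{1/2} (B^{-1/2} A B^{-1/2})^α B^{1/2}`. -/
noncomputable def wgeomMean {n : Type*} [Fintype n] [DecidableEq n] (α : ℝ)
    (A B : Matrix n n ℂ) : Matrix n n ℂ :=
  msqrt B * mrpow ((msqrt B)⁻¹ * A * (msqrt B)⁻¹) α * msqrt B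

/-- The harmonic mean `2 (A⁻¹ + B⁻¹)⁻¹`. -/
noncomputable def harmMean {n : Type*} [Fintype n] [DecidableEq n] (A B : Matrix n n ℂ) :
    Matrix n n ℂ :=
  (2 : ℂ) • (A⁻¹ + B⁻¹)⁻¹

private lemma sum_fromBlocks {l n o p : Type*} {r : ℕ}
    (a : Fin r → Matrix n l ℂ) (b : Fin r → Matrix n o ℂ)
    (c : Fin r → Matrix p l ℂ) (d : Fin r → Matrix p o ℂ) :
    ∑ i, fromBlocks (a i) (b i) (c i) (d i) =
      fromBlocks (∑ i, a i) (∑ i, b i) (∑ i, c i) (∑ i, d i) := by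
  induction (Finset.univ : Finset (Fin r)) using Finset.cons_induction with
  | empty => simp [← fromBlocks_zero]
  | cons x s hx ih => simp [Finset.sum_insert hx, ih, fromBlocks_add]


/-- `Φ(A) + Φ(K)* Φ(A)⁻¹ Φ(K) ≤ Φ(A + K* A⁻¹ K)` for a completely positive map `Φ`. -/
theorem cp_lieb_ruskai_strengthened {n m : Type*} [Fintype n] [DecidableEq n]
    [Fintype m] [DecidableEq m]
    (Φ : Matrix n n ℂ → Matrix m m ℂ) (hΦ : IsCPMap Φ)
    (A K : Matrix n n ℂ) (hA : A.PosDef) (hΦA : (Φ A).PosDef) :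
    (Φ (A + Kᴴ * A⁻¹ * K) - (Φ A + (Φ K)ᴴ * (Φ A)⁻¹ * Φ K)).PosSemidef := by
  obtain ⟨r, C, hC⟩ := hΦ
  have hlin : Φ (A + Kᴴ * A⁻¹ * K) = Φ A + Φ (Kᴴ * A⁻¹ * K) := by
    simp only [hC, ← Finset.sum_add_distrib, Matrix.mul_add, Matrix.add_mul]
  have hadj : Φ Kᴴ = (Φ K)ᴴ := by
    simp only [hC, conjTranspose_sum, conjTranspose_mul, conjTranspose_conjTranspose,
      Matrix.mul_assoc]
  -- block matrix M is PSD
  have hM : (fromBlocks A K Kᴴ (Kᴴ * A⁻¹ * K)).PosSemidef := by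
    haveI := hA.isUnit.invertible
    rw [PosDef.fromBlocks₁₁ _ _ hA]
    simpa using PosSemidef.zero (n := n) (R := ℂ)
  -- blockwise application of Φ
  have key : (fromBlocks (Φ A) (Φ K) (Φ K)ᴴ (Φ (Kᴴ * A⁻¹ * K))).PosSemidef := by
    rw [← hadj]
    have heq : fromBlocks (Φ A) (Φ K) (Φ Kᴴ) (Φ (Kᴴ * A⁻¹ * K)) =
        ∑ i, (fromBlocks (C i) 0 0 (C i))ᴴ * (fromBlocks A K Kᴴ (Kᴴ * A⁻¹ * K)) *
          (fromBlocks (C i) 0 0 (C i)) := by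
      simp only [hC, fromBlocks_conjTranspose, conjTranspose_zero, fromBlocks_multiply,
        Matrix.mul_zero, Matrix.zero_mul, add_zero, zero_add, sum_fromBlocks]
    rw [heq]
    exact Finset.sum_induction _ _ (fun a b ha hb => ha.add hb) (PosSemidef.zero)
      (fun i _ => hM.conjTranspose_mul_mul_same _)
  haveI := hΦA.isUnit.invertible
  rw [PosDef.fromBlocks₁₁ _ _ hΦA] at key
  rw [hlin]
  have : Φ A + Φ (Kᴴ * A⁻¹ * K) - (Φ A + (Φ K)ᴴ * (Φ A)⁻¹ * Φ K)
      = Φ (Kᴴ * A⁻¹ * K) - (Φ K)ᴴ * (Φ A)⁻¹ * Φ K := by abel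
  rw [this]
  exact key
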